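/- Let (X_i)_{i∈ℕ} be independent real random variables with E[X_i] = 0 for all i and sup_i E[exp{K (log⁺|X_i|)^γ}] < ∞ for some K > 0 and γ > 1, where log⁺ x = max(log x, 0). Then for all ε > 0 there exists c > 0 such that for all n ∈ ℕ: P(∃ k ≥ n : |∑_{i=1}^k X_i| > εk) ≤ c^{−1} e^{−c (log n)^γ}. -/

import Mathlib

open MeasureTheory ProbabilityTheory

section Aux
open Real Filter

variable {Ω : Type*} [MeasurableSpace Ω] {P : Measure Ω} [IsProbabilityMeasure P]

set_option linter.unusedVariables false
set_option linter.unusedSectionVars false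


lemma exp_quad {x : ℝ} (hx : |x| ≤ 1) : Real.exp x ≤ 1 + x + (3/4) * x^2 := by
  have h := Real.exp_bound hx (n := 2) (by norm_num)
  have h2 : ∑ m ∈ Finset.range 2, x ^ m / m.factorial = 1 + x := by
    simp [Finset.sum_range_succ]
  rw [h2] at h
  have h3 := (abs_sub_le_iff.1 h).1
  have hx2 : |x|^2 = x^2 := sq_abs x
  norm_num [Nat.factorial] at h3
  nlinarith [h3]

lemma lin_le_rpow {K γ : ℝ} (hK : 0 < K) (hγ : 1 < γ) (p : ℝ) (hp : 0 < p) :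
    ∃ B : ℝ, 0 ≤ B ∧ ∀ t : ℝ, 0 ≤ t → p * t ≤ K * t ^ γ + B := by
  set t₀ : ℝ := (p / K) ^ (1 / (γ - 1)) with ht₀
  have ht₀pos : 0 < t₀ := Real.rpow_pos_of_pos (div_pos hp hK) _
  refine ⟨p * t₀, by positivity, fun t ht => ?_⟩
  rcases le_or_gt t t₀ with h | h
  · have : p * t ≤ p * t₀ := by nlinarith
    have h2 : 0 ≤ K * t ^ γ := by positivity
    linarith
  · have htpos : 0 < t := ht₀pos.trans h
    have h1 : (p / K) ≤ t ^ (γ - 1) := by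
      have h5 : t₀ ^ (γ - 1) ≤ t ^ (γ - 1) :=
        Real.rpow_le_rpow ht₀pos.le h.le (by linarith)
      rw [ht₀, ← Real.rpow_mul (div_pos hp hK).le, one_div,
        inv_mul_cancel₀ (by linarith : γ - 1 ≠ 0), Real.rpow_one] at h5
      exact h5
    have h2 : t ^ γ = t ^ (γ - 1) * t := by
      rw [← Real.rpow_add_one htpos.ne' (γ-1)]; ring_nf
    have h3 : p * t ≤ K * t ^ γ := by
      rw [h2]
      calc p * t = (p / K) * t * K := by field_simp
        _ ≤ t ^ (γ-1) * t * K := by have := mul_le_mul_of_nonneg_right (mul_le_mul_of_nonneg_right h1 ht) hK.le; linarith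
        _ = K * (t ^ (γ-1) * t) := by ring
    have : 0 ≤ p * t₀ := by positivity
    linarith

lemma sq_le_expmom {K γ B : ℝ} (hB : ∀ t : ℝ, 0 ≤ t → 2 * t ≤ K * t ^ γ + B) (x : ℝ) :
    x ^ 2 ≤ Real.exp B * Real.exp (K * Real.log (max |x| 1) ^ γ) := by
  set m := max |x| 1 with hm
  have hm1 : 1 ≤ m := le_max_right _ _
  have hmpos : 0 < m := lt_of_lt_of_le one_pos hm1
  have hu : 0 ≤ Real.log m := Real.log_nonneg hm1
  have h1 : x ^ 2 ≤ m ^ 2 := by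
    have : |x| ≤ m := le_max_left _ _
    nlinarith [abs_nonneg x, sq_abs x]
  have h2 : m ^ 2 = Real.exp (2 * Real.log m) := by
    rw [mul_comm, Real.exp_mul, Real.exp_log hmpos]; norm_num
  have h3 : Real.exp (2 * Real.log m) ≤ Real.exp (K * Real.log m ^ γ + B) :=
    Real.exp_le_exp.2 (hB _ hu)
  rw [Real.exp_add] at h3
  have h4 : x ^ 2 ≤ Real.exp (K * Real.log m ^ γ) * Real.exp B := le_trans (h2 ▸ h1) h3
  linarith [h4]

lemma tail_bound {X : Ω → ℝ} {K γ M : ℝ} (hK : 0 < K) (hγ : 0 ≤ γ)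
    (hexpint : Integrable (fun ω => Real.exp (K * Real.log (max |X ω| 1) ^ γ)) P)
    (hM : ∫ ω, Real.exp (K * Real.log (max |X ω| 1) ^ γ) ∂P ≤ M)
    {T : ℝ} (hT : 1 ≤ T) :
    (P {ω | T < |X ω|}).toReal ≤ M * Real.exp (-(K * Real.log T ^ γ)) := by
  set c := K * Real.log T ^ γ with hc
  have hsub : {ω | T < |X ω|} ⊆ {ω | Real.exp c ≤ Real.exp (K * Real.log (max |X ω| 1) ^ γ)} := by
    intro ω hω
    simp only [Set.mem_setOf_eq] at hω ⊢
    apply Real.exp_le_exp.2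
    apply mul_le_mul_of_nonneg_left _ hK.le
    apply Real.rpow_le_rpow (Real.log_nonneg hT)
    · apply Real.log_le_log (lt_of_lt_of_le one_pos hT)
      exact le_trans hω.le (le_max_left _ _)
    · positivity
  have hmono : (P {ω | T < |X ω|}).toReal ≤
      (P {ω | Real.exp c ≤ Real.exp (K * Real.log (max |X ω| 1) ^ γ)}).toReal :=
    ENNReal.toReal_mono (measure_ne_top _ _) (measure_mono hsub)
  have hmarkov := mul_meas_ge_le_integral_of_nonneg
    (ae_of_all _ fun ω => (Real.exp_pos _).le) hexpint (Real.exp c)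
  have hexpc : 0 < Real.exp c := Real.exp_pos _
  have : (P {ω | Real.exp c ≤ Real.exp (K * Real.log (max |X ω| 1) ^ γ)}).toReal ≤ M / Real.exp c := by
    rw [le_div_iff₀ hexpc]
    calc _ = Real.exp c * (P _).toReal := mul_comm _ _
      _ ≤ ∫ ω, Real.exp (K * Real.log (max |X ω| 1) ^ γ) ∂P := hmarkov
      _ ≤ M := hM
  calc (P {ω | T < |X ω|}).toReal ≤ M / Real.exp c := hmono.trans this
    _ = M * Real.exp (-c) := by rw [Real.exp_neg, div_eq_mul_inv]

lemma M_ge_one {X : Ω → ℝ} {K γ M : ℝ} (hK : 0 ≤ K)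
    (hexpint : Integrable (fun ω => Real.exp (K * Real.log (max |X ω| 1) ^ γ)) P)
    (hM : ∫ ω, Real.exp (K * Real.log (max |X ω| 1) ^ γ) ∂P ≤ M) : 1 ≤ M := by
  have h1 : ∫ ω, (1:ℝ) ∂P ≤ ∫ ω, Real.exp (K * Real.log (max |X ω| 1) ^ γ) ∂P := by
    apply integral_mono (integrable_const 1) hexpint
    intro ω
    have : (0:ℝ) ≤ K * Real.log (max |X ω| 1) ^ γ → 1 ≤ Real.exp (K * Real.log (max |X ω| 1) ^ γ) :=
      fun h => by simpa using Real.exp_le_exp.2 h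
    exact this (mul_nonneg hK (Real.rpow_nonneg (Real.log_nonneg (le_max_right _ _)) _))
  simpa using h1.trans hM

lemma sq_integrable {X : Ω → ℝ} {K γ B M : ℝ}
    (hmeas : Measurable X)
    (hB : ∀ t : ℝ, 0 ≤ t → 2 * t ≤ K * t ^ γ + B)
    (hsq : ∀ x : ℝ, x ^ 2 ≤ Real.exp B * Real.exp (K * Real.log (max |x| 1) ^ γ))
    (hexpint : Integrable (fun ω => Real.exp (K * Real.log (max |X ω| 1) ^ γ)) P)
    (hM : ∫ ω, Real.exp (K * Real.log (max |X ω| 1) ^ γ) ∂P ≤ M) :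
    Integrable (fun ω => (X ω) ^ 2) P ∧ ∫ ω, (X ω) ^ 2 ∂P ≤ Real.exp B * M := by
  have hint : Integrable (fun ω => (X ω) ^ 2) P := by
    apply Integrable.mono' (hexpint.const_mul (Real.exp B))
      ((hmeas.pow_const 2).aestronglyMeasurable)
    filter_upwards with ω
    rw [Real.norm_eq_abs, abs_of_nonneg (sq_nonneg _)]
    exact hsq (X ω)
  refine ⟨hint, ?_⟩
  calc ∫ ω, (X ω) ^ 2 ∂P ≤ ∫ ω, Real.exp B * Real.exp (K * Real.log (max |X ω| 1) ^ γ) ∂P :=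
        integral_mono hint (hexpint.const_mul _) (fun ω => hsq (X ω))
    _ = Real.exp B * ∫ ω, Real.exp (K * Real.log (max |X ω| 1) ^ γ) ∂P := integral_const_mul _ _
    _ ≤ Real.exp B * M := by
        apply mul_le_mul_of_nonneg_left hM (Real.exp_pos _).le

noncomputable def trf (T : ℝ) (x : ℝ) : ℝ := if |x| ≤ T then x else 0

lemma trf_meas (T : ℝ) : Measurable (trf T) := by
  unfold trf
  exact Measurable.ite (measurableSet_le measurable_abs measurable_const)
    measurable_id measurable_const

lemma trf_abs_le (T : ℝ) (hT : 0 ≤ T) (x : ℝ) : |trf T x| ≤ T := by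
  unfold trf; split_ifs with h
  · exact h
  · simpa using hT

lemma chernoff_sum (X : ℕ → Ω → ℝ) (hmeas : ∀ i, Measurable (X i))
    (hindep : iIndepFun X P)
    {C T : ℝ} (hT : 0 < T)
    (hmgf : ∀ i, mgf (fun ω => trf T (X i ω)) P (1/T) ≤ Real.exp ((7/4) * C / T^2))
    (k : ℕ) (s : ℝ) :
    (P {ω | s ≤ ∑ i ∈ Finset.range k, trf T (X i ω)}).toReal ≤
      Real.exp (-(s/T) + k * ((7/4) * C / T^2)) := by
  set Y : ℕ → Ω → ℝ := fun i ω => trf T (X i ω) with hY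
  have hYmeas : ∀ i, Measurable (Y i) := fun i => (trf_meas T).comp (hmeas i)
  have hYindep : iIndepFun Y P :=
    hindep.comp (fun _ => trf T) (fun _ => trf_meas T)
  have hbdd : ∀ ω, |(∑ i ∈ Finset.range k, Y i) ω| ≤ k * T := by
    intro ω
    rw [Finset.sum_apply]
    calc |∑ i ∈ Finset.range k, Y i ω| ≤ ∑ i ∈ Finset.range k, |Y i ω| :=
          Finset.abs_sum_le_sum_abs _ _
      _ ≤ ∑ _i ∈ Finset.range k, T := Finset.sum_le_sum fun i _ => trf_abs_le T hT.le _
      _ = k * T := by simp [mul_comm]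
  have hSmeas : Measurable (∑ i ∈ Finset.range k, Y i) := by
    have : (∑ i ∈ Finset.range k, Y i) = fun ω => ∑ i ∈ Finset.range k, Y i ω := by
      funext ω; rw [Finset.sum_apply]
    rw [this]
    exact Finset.measurable_sum _ (fun i _ => hYmeas i)
  have h_int : Integrable (fun ω => Real.exp ((1/T) * (∑ i ∈ Finset.range k, Y i) ω)) P := by
    apply Integrable.mono' (integrable_const (Real.exp k))
      ((hSmeas.const_mul _).exp.aestronglyMeasurable)
    filter_upwards with ω
    rw [Real.norm_eq_abs, abs_of_nonneg (Real.exp_pos _).le]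
    apply Real.exp_le_exp.2
    calc (1/T) * (∑ i ∈ Finset.range k, Y i) ω ≤ (1/T) * (k * T) := by
          apply mul_le_mul_of_nonneg_left (le_trans (le_abs_self _) (hbdd ω)) (by positivity)
      _ = k := by field_simp
  have hchern := measure_ge_le_exp_mul_mgf (μ := P) (X := ∑ i ∈ Finset.range k, Y i) s
    (by positivity : (0:ℝ) ≤ 1/T) h_int
  have hset : {ω | s ≤ ∑ i ∈ Finset.range k, trf T (X i ω)} =
      {ω | s ≤ (∑ i ∈ Finset.range k, Y i) ω} := by
    ext ω; simp [hY, Finset.sum_apply]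
  rw [hset]
  refine hchern.trans ?_
  rw [hYindep.mgf_sum hYmeas]
  calc Real.exp (-(1/T) * s) * ∏ i ∈ Finset.range k, mgf (Y i) P (1/T)
      ≤ Real.exp (-(1/T) * s) * ∏ _i ∈ Finset.range k, Real.exp ((7/4) * C / T^2) := by
        apply mul_le_mul_of_nonneg_left _ (Real.exp_pos _).le
        exact Finset.prod_le_prod (fun i _ => mgf_nonneg) (fun i _ => hmgf i)
    _ = Real.exp (-(s/T) + k * ((7/4) * C / T^2)) := by
        rw [Finset.prod_const, ← Real.exp_nat_mul, ← Real.exp_add]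
        congr 1
        simp [Finset.card_range]
        ring

lemma trf_sq_le (T x : ℝ) : (trf T x) ^ 2 ≤ x ^ 2 := by
  unfold trf; split_ifs with h
  · exact le_refl _
  · simpa using sq_nonneg x

lemma mgf_trunc_le {X : Ω → ℝ} {C T : ℝ} (hmeas : Measurable X) (hint : Integrable X P)
    (hmean : ∫ ω, X ω ∂P = 0)
    (hsqint : Integrable (fun ω => (X ω)^2) P) (hC : ∫ ω, (X ω)^2 ∂P ≤ C)
    (hT : 0 < T) :
    mgf (fun ω => trf T (X ω)) P (1/T) ≤ Real.exp ((7/4) * C / T^2) := by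
  set Y : Ω → ℝ := fun ω => trf T (X ω) with hY
  have hYmeas : Measurable Y := (trf_meas T).comp hmeas
  have hYbdd : ∀ ω, |Y ω| ≤ T := fun ω => trf_abs_le T hT.le (X ω)
  have hYint : Integrable Y P := by
    apply Integrable.mono' (integrable_const T) hYmeas.aestronglyMeasurable
    filter_upwards with ω; exact hYbdd ω
  have hY2int : Integrable (fun ω => (Y ω)^2) P := by
    apply Integrable.mono' (integrable_const (T^2)) ((hYmeas.pow_const 2).aestronglyMeasurable)
    filter_upwards with ω
    rw [Real.norm_eq_abs, abs_of_nonneg (sq_nonneg _)]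
    nlinarith [hYbdd ω, abs_nonneg (Y ω), sq_abs (Y ω)]
  have hCnn : 0 ≤ C := le_trans (integral_nonneg (fun ω => sq_nonneg _)) hC
  -- E Y^2 ≤ C
  have hEY2 : ∫ ω, (Y ω)^2 ∂P ≤ C :=
    le_trans (integral_mono hY2int hsqint (fun ω => trf_sq_le T (X ω))) hC
  -- |E Y| ≤ C / T
  have hdiff_int : Integrable (fun ω => X ω - Y ω) P := hint.sub hYint
  have hEY : |∫ ω, Y ω ∂P| ≤ C / T := by
    have hYeq : ∫ ω, Y ω ∂P = -∫ ω, (X ω - Y ω) ∂P := by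
      rw [integral_sub hint hYint, hmean]; ring
    have hptw : ∀ ω, |X ω - Y ω| ≤ (X ω)^2 / T := by
      intro ω
      show |X ω - trf T (X ω)| ≤ (X ω)^2 / T
      unfold trf; split_ifs with h
      · simp only [sub_self, abs_zero]; positivity
      · push_neg at h
        rw [sub_zero, le_div_iff₀ hT]
        nlinarith [h.le, abs_nonneg (X ω), sq_abs (X ω)]
    calc |∫ ω, Y ω ∂P| = |∫ ω, (X ω - Y ω) ∂P| := by rw [hYeq, abs_neg]
      _ ≤ ∫ ω, |X ω - Y ω| ∂P := (by simpa [Real.norm_eq_abs] using norm_integral_le_integral_norm (μ := P) (fun ω => X ω - Y ω))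
      _ ≤ ∫ ω, (X ω)^2 / T ∂P := by
          apply integral_mono hdiff_int.abs (hsqint.div_const T) hptw
      _ = (∫ ω, (X ω)^2 ∂P) / T := by rw [integral_div]
      _ ≤ C / T := by gcongr
  -- mgf bound
  have hlam : ∀ ω, |(1/T) * Y ω| ≤ 1 := by
    intro ω
    rw [abs_mul, abs_of_nonneg (by positivity : (0:ℝ) ≤ 1/T)]
    rw [div_mul_eq_mul_div, one_mul, div_le_one hT]
    exact hYbdd ω
  have hexp_ptw : ∀ ω, Real.exp ((1/T) * Y ω) ≤
      1 + (1/T) * Y ω + (3/4) * ((1/T) * Y ω)^2 := fun ω => exp_quad (hlam ω)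
  have hrhs_int : Integrable (fun ω => 1 + (1/T) * Y ω + (3/4) * ((1/T) * Y ω)^2) P := by
    apply Integrable.add
    · exact (integrable_const 1).add (hYint.const_mul _)
    · have : (fun ω => (3/4) * ((1/T) * Y ω)^2) = fun ω => ((3/4) * (1/T)^2) * (Y ω)^2 := by
        funext ω; ring
      rw [this]
      exact hY2int.const_mul _
  have hexp_int : Integrable (fun ω => Real.exp ((1/T) * Y ω)) P := by
    apply Integrable.mono' (integrable_const (Real.exp 1))
      (((hYmeas.const_mul _).exp).aestronglyMeasurable)
    filter_upwards with ω
    rw [Real.norm_eq_abs, abs_of_nonneg (Real.exp_pos _).le]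
    exact Real.exp_le_exp.2 (le_trans (le_abs_self _) (hlam ω))
  have h1 : mgf Y P (1/T) ≤ 1 + (1/T) * (∫ ω, Y ω ∂P) + (3/4) * (1/T)^2 * ∫ ω, (Y ω)^2 ∂P := by
    unfold mgf
    calc ∫ ω, Real.exp ((1/T) * Y ω) ∂P
        ≤ ∫ ω, (1 + (1/T) * Y ω + (3/4) * ((1/T) * Y ω)^2) ∂P :=
          integral_mono hexp_int hrhs_int hexp_ptw
      _ = 1 + (1/T) * (∫ ω, Y ω ∂P) + (3/4) * (1/T)^2 * ∫ ω, (Y ω)^2 ∂P := by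
          have hint1 : Integrable (fun ω => 1 + (1/T) * Y ω) P := by
            exact (integrable_const 1).add (hYint.const_mul _)
          have hint2 : Integrable (fun ω => (3/4) * ((1/T) * Y ω)^2) P := by
            have heq : (fun ω => (3/4) * ((1/T) * Y ω)^2) = fun ω => ((3/4) * (1/T)^2) * (Y ω)^2 := by
              funext ω; ring
            rw [heq]; exact hY2int.const_mul _
          rw [integral_add hint1 hint2, integral_add (integrable_const 1) (hYint.const_mul _)]
          simp only [integral_const, measure_univ, ENNReal.toReal_one, probReal_univ, smul_eq_mul, one_mul]
          rw [integral_const_mul]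
          have heq2 : ∫ ω, (3/4) * ((1/T) * Y ω)^2 ∂P = (3/4) * (1/T)^2 * ∫ ω, (Y ω)^2 ∂P := by
            rw [show (fun ω => (3/4) * ((1/T) * Y ω)^2) = fun ω => ((3/4) * (1/T)^2) * (Y ω)^2
              from funext fun ω => by ring, integral_const_mul]
          rw [heq2]
  have h2 : 1 + (1/T) * (∫ ω, Y ω ∂P) + (3/4) * (1/T)^2 * ∫ ω, (Y ω)^2 ∂P ≤
      Real.exp ((1/T) * (∫ ω, Y ω ∂P) + (3/4) * (1/T)^2 * ∫ ω, (Y ω)^2 ∂P) := by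
    have := Real.add_one_le_exp ((1/T) * (∫ ω, Y ω ∂P) + (3/4) * (1/T)^2 * ∫ ω, (Y ω)^2 ∂P)
    linarith
  have h3 : (1/T) * (∫ ω, Y ω ∂P) + (3/4) * (1/T)^2 * ∫ ω, (Y ω)^2 ∂P ≤ (7/4) * C / T^2 := by
    have ha : (1/T) * (∫ ω, Y ω ∂P) ≤ C / T^2 := by
      have : (∫ ω, Y ω ∂P) ≤ C / T := le_trans (le_abs_self _) hEY
      calc (1/T) * (∫ ω, Y ω ∂P) ≤ (1/T) * (C/T) := by
            apply mul_le_mul_of_nonneg_left this (by positivity)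
        _ = C / T^2 := by ring
    have hb : (3/4) * (1/T)^2 * ∫ ω, (Y ω)^2 ∂P ≤ (3/4) * C / T^2 := by
      have h4 : (0:ℝ) ≤ (3/4) * (1/T)^2 := by positivity
      calc (3/4) * (1/T)^2 * ∫ ω, (Y ω)^2 ∂P ≤ (3/4) * (1/T)^2 * C :=
            mul_le_mul_of_nonneg_left hEY2 h4
        _ = (3/4) * C / T^2 := by ring
    have h7 : (7/4) * C / T^2 = C/T^2 + (3/4) * C / T^2 := by ring
    linarith
  exact le_trans h1 (le_trans h2 (Real.exp_le_exp.2 h3))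

lemma onesided_k (X : ℕ → Ω → ℝ) (hmeas : ∀ i, Measurable (X i))
    {T : ℝ} (hT1 : 1 ≤ T) (k : ℕ) (s : ℝ)
    (tb : ℝ) (htb : 0 ≤ tb)
    (htail : ∀ i, (P {ω | T < |X i ω|}).toReal ≤ tb)
    (cb : ℝ)
    (hchern : (P {ω | s ≤ ∑ i ∈ Finset.range k, trf T (X i ω)}).toReal ≤ cb) :
    (P {ω | s ≤ ∑ i ∈ Finset.range k, X i ω}).toReal ≤ k * tb + cb := by
  set U : Set Ω := ⋃ i ∈ Finset.range k, {ω | T < |X i ω|} with hU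
  set B : Set Ω := {ω | s ≤ ∑ i ∈ Finset.range k, trf T (X i ω)} with hB
  have hsub : {ω | s ≤ ∑ i ∈ Finset.range k, X i ω} ⊆ U ∪ B := by
    intro ω hω
    by_cases h : ω ∈ U
    · exact Or.inl h
    · right
      simp only [hU, Set.mem_iUnion, not_exists, Set.mem_setOf_eq, not_lt] at h
      have : ∀ i ∈ Finset.range k, trf T (X i ω) = X i ω := by
        intro i hi
        have := h i hi
        unfold trf
        rw [if_pos this]
      rw [hB, Set.mem_setOf_eq, Finset.sum_congr rfl this]
      exact hω
  have hm : P {ω | s ≤ ∑ i ∈ Finset.range k, X i ω} ≤ P U + P B :=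
    le_trans (measure_mono hsub) (measure_union_le U B)
  have h1 : (P {ω | s ≤ ∑ i ∈ Finset.range k, X i ω}).toReal ≤ (P U).toReal + (P B).toReal := by
    refine le_trans (ENNReal.toReal_mono ?_ hm) ENNReal.toReal_add_le
    exact ENNReal.add_ne_top.2 ⟨measure_ne_top _ _, measure_ne_top _ _⟩
  have hPU : (P U).toReal ≤ k * tb := by
    have h2 : P U ≤ ∑ i ∈ Finset.range k, P {ω | T < |X i ω|} :=
      measure_biUnion_finset_le _ _
    have h3 : (P U).toReal ≤ ∑ i ∈ Finset.range k, (P {ω | T < |X i ω|}).toReal := by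
      refine le_trans (ENNReal.toReal_mono ?_ h2) ?_
      · exact (ENNReal.sum_lt_top.2 fun i _ => measure_lt_top _ _).ne
      · rw [ENNReal.toReal_sum (fun i _ => measure_ne_top _ _)]
    refine h3.trans ?_
    calc ∑ i ∈ Finset.range k, (P {ω | T < |X i ω|}).toReal ≤ ∑ _i ∈ Finset.range k, tb :=
          Finset.sum_le_sum fun i _ => htail i
      _ = k * tb := by simp [mul_comm]
  linarith [hPU, hchern, h1]

set_option maxHeartbeats 1000000 in
lemma onesided_main (X : ℕ → Ω → ℝ) (hmeas : ∀ i, Measurable (X i))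
    (hindep : iIndepFun X P)
    (hint : ∀ i, Integrable (X i) P) (hmean : ∀ i, ∫ ω, X i ω ∂P = 0)
    {K γ M C : ℝ} (hK : 0 < K) (hγ : 1 < γ) (hM1 : 1 ≤ M) (hC0 : 0 ≤ C)
    (htail : ∀ i, ∀ T : ℝ, 1 ≤ T →
      (P {ω | T < |X i ω|}).toReal ≤ M * Real.exp (-(K * Real.log T ^ γ)))
    (hsqint : ∀ i, Integrable (fun ω => (X i ω)^2) P)
    (hC : ∀ i, ∫ ω, (X i ω)^2 ∂P ≤ C)
    {a : ℝ} (ha0 : 0 < a) (ha1 : a ≤ 1) (haK : a ≤ K / (2 * (2:ℝ) ^ γ))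
    (ε : ℝ) (hε : 0 < ε) :
    ∀ᶠ k : ℕ in atTop, (P {ω | ε * k ≤ ∑ i ∈ Finset.range k, X i ω}).toReal ≤
      2 * Real.exp (-a * Real.log k ^ γ) := by
  set a₀ : ℝ := K / (2 * (2:ℝ) ^ γ) with ha₀def
  have h2γ : (0:ℝ) < (2:ℝ) ^ γ := Real.rpow_pos_of_pos two_pos γ
  have ha₀pos : 0 < a₀ := by positivity
  have hγ0 : (0:ℝ) ≤ γ := by linarith
  -- eventual conditions
  have ev1 : ∀ᶠ k : ℕ in atTop, (3:ℕ) ≤ k := eventually_ge_atTop 3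
  have evL : ∀ᶠ k : ℕ in atTop, 1 ≤ Real.log k :=
    (tendsto_log_atTop.comp (tendsto_natCast_atTop_atTop (R := ℝ))).eventually_ge_atTop 1
  have ev2 : ∀ᶠ k : ℕ in atTop, 2 * Real.log k ^ γ ≤ ε * Real.sqrt k := by
    have hlo := isLittleO_log_rpow_rpow_atTop γ (one_half_pos)
    have hb := hlo.bound (div_pos hε two_pos)
    have hb2 := (tendsto_natCast_atTop_atTop (R := ℝ)).eventually hb
    filter_upwards [hb2, evL] with k hk hkL
    have hk0 : (0:ℝ) ≤ (k:ℝ) := Nat.cast_nonneg k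
    rw [Real.norm_eq_abs, Real.norm_eq_abs] at hk
    have hL0 : (0:ℝ) ≤ Real.log k := by linarith
    rw [abs_of_nonneg (Real.rpow_nonneg hL0 γ),
      abs_of_nonneg (Real.rpow_nonneg hk0 _)] at hk
    rw [Real.sqrt_eq_rpow]
    nlinarith [hk]
  have ev3 : ∀ᶠ k : ℕ in atTop, 4 * (C+1) / ε ≤ Real.sqrt k := by
    have := (tendsto_natCast_atTop_atTop (R := ℝ)).eventually_ge_atTop
      ((4 * (C+1) / ε)^2)
    filter_upwards [this] with k hk
    exact (Real.le_sqrt (by positivity) (le_trans (by positivity) hk)).2 hk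
  have ev4 : ∀ᶠ k : ℕ in atTop, Real.log k + Real.log M ≤ a₀ * Real.log k ^ γ := by
    have h1 : ∀ᶠ u : ℝ in atTop, 2/a₀ ≤ u ^ (γ - 1) :=
      (tendsto_rpow_atTop (by linarith : (0:ℝ) < γ - 1)).eventually_ge_atTop _
    have h2 : ∀ᶠ u : ℝ in atTop, 2 * Real.log M / a₀ ≤ u ^ γ :=
      (tendsto_rpow_atTop (by linarith : (0:ℝ) < γ)).eventually_ge_atTop _
    have h3 : ∀ᶠ u : ℝ in atTop, (1:ℝ) ≤ u := eventually_ge_atTop 1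
    have hu : ∀ᶠ u : ℝ in atTop, u + Real.log M ≤ a₀ * u ^ γ := by
      filter_upwards [h1, h2, h3] with u hu1 hu2 hu3
      have hupos : (0:ℝ) < u := by linarith
      have hsplit : u ^ γ = u ^ (γ - 1) * u := by
        rw [← Real.rpow_add_one hupos.ne' (γ - 1)]; ring_nf
      have hA : u ≤ a₀ / 2 * u ^ γ := by
        rw [hsplit]
        have := mul_le_mul_of_nonneg_right hu1 (le_of_lt hupos)
        calc u = a₀/2 * (2/a₀ * u) := by field_simp
          _ ≤ a₀/2 * (u ^ (γ-1) * u) := by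
              apply mul_le_mul_of_nonneg_left _ (by positivity)
              exact this
      have hB : Real.log M ≤ a₀ / 2 * u ^ γ := by
        calc Real.log M = a₀/2 * (2 * Real.log M / a₀) := by field_simp
          _ ≤ a₀/2 * u ^ γ := by
              apply mul_le_mul_of_nonneg_left hu2 (by positivity)
      linarith
    exact (tendsto_log_atTop.comp (tendsto_natCast_atTop_atTop (R := ℝ))).eventually hu
  -- main computation
  filter_upwards [ev1, evL, ev2, ev3, ev4] with k hk3 hL1 h2s h3s h4s
  set L : ℝ := Real.log k with hLdef
  have hk3' : (3:ℝ) ≤ (k:ℝ) := by exact_mod_cast hk3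
  have hk0 : (0:ℝ) < (k:ℝ) := by linarith
  have hLγpos : (0:ℝ) < L ^ γ := Real.rpow_pos_of_pos (by linarith) γ
  set T : ℝ := ε * k / (2 * L ^ γ) with hTdef
  have hT0 : 0 < T := by positivity
  have hsqk1 : (1:ℝ) ≤ Real.sqrt k := by
    rw [show (1:ℝ) = Real.sqrt 1 from (Real.sqrt_one).symm]
    exact Real.sqrt_le_sqrt (by linarith)
  have hTsqrt : Real.sqrt k ≤ T := by
    rw [hTdef, le_div_iff₀ (by positivity)]
    have hss : Real.sqrt k * Real.sqrt k = (k:ℝ) := Real.mul_self_sqrt hk0.le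
    nlinarith [h2s, hsqk1]
  have hT1 : (1:ℝ) ≤ T := le_trans hsqk1 hTsqrt
  have hTC : 4 * (C+1) / ε ≤ T := le_trans h3s hTsqrt
  -- tail bound term
  set tb : ℝ := M * Real.exp (-(K * Real.log T ^ γ)) with htbdef
  have htb0 : 0 ≤ tb := mul_nonneg (by linarith) (Real.exp_pos _).le
  -- chernoff
  have hmgf : ∀ i, mgf (fun ω => trf T (X i ω)) P (1/T) ≤ Real.exp ((7/4) * C / T^2) :=
    fun i => mgf_trunc_le (hmeas i) (hint i) (hmean i) (hsqint i) (hC i) hT0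
  have hcb := chernoff_sum X hmeas hindep hT0 hmgf k (ε * k)
  have htot := onesided_k X hmeas hT1 k (ε * k) tb htb0
    (fun i => htail i T hT1) _ hcb
  refine htot.trans ?_
  -- bound the tail part
  have hlogT : L / 2 ≤ Real.log T := by
    calc L / 2 = Real.log (Real.sqrt k) := (Real.log_sqrt hk0.le).symm
      _ ≤ Real.log T := Real.log_le_log (by linarith) hTsqrt
  have hlogT0 : (0:ℝ) ≤ L / 2 := by linarith
  have hpow : L ^ γ / (2:ℝ) ^ γ ≤ Real.log T ^ γ := by
    calc L ^ γ / (2:ℝ) ^ γ = (L / 2) ^ γ := (Real.div_rpow (by linarith) (by norm_num) γ).symm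
      _ ≤ Real.log T ^ γ := Real.rpow_le_rpow hlogT0 hlogT hγ0
  have hKT : 2 * a₀ * L ^ γ ≤ K * Real.log T ^ γ := by
    have h5 : K * (L ^ γ / (2:ℝ) ^ γ) ≤ K * Real.log T ^ γ :=
      mul_le_mul_of_nonneg_left hpow hK.le
    have h6 : 2 * a₀ * L ^ γ = K * (L ^ γ / (2:ℝ) ^ γ) := by
      rw [ha₀def]; field_simp
    linarith
  have htail_term : (k:ℝ) * tb ≤ Real.exp (-a * L ^ γ) := by
    have e1 : (k:ℝ) * tb = Real.exp (L + Real.log M + -(K * Real.log T ^ γ)) := by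
      rw [htbdef, Real.exp_add, Real.exp_add, hLdef, Real.exp_log hk0,
        Real.exp_log (by linarith : (0:ℝ) < M)]
      ring
    rw [e1]
    apply Real.exp_le_exp.2
    have : a * L ^ γ ≤ a₀ * L ^ γ := mul_le_mul_of_nonneg_right haK hLγpos.le
    linarith [h4s, hKT]
  -- bound the chernoff part
  have hchern_term : Real.exp (-(ε * k / T) + k * ((7/4) * C / T^2)) ≤
      Real.exp (-a * L ^ γ) := by
    apply Real.exp_le_exp.2
    have hεk : (0:ℝ) < ε * k := by positivity
    have e2 : ε * k / T = 2 * L ^ γ := by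
      rw [hTdef, div_div_eq_mul_div, mul_comm (ε * (k:ℝ)) (2 * L ^ γ),
        mul_div_assoc, div_self hεk.ne', mul_one]
    have e3 : (k:ℝ) / T = 2 * L ^ γ / ε := by
      rw [hTdef, div_div_eq_mul_div]
      rw [div_eq_div_iff (by positivity) hε.ne']
      ring
    have hinvT : 1 / T ≤ ε / (4 * (C+1)) := by
      rw [div_le_div_iff₀ hT0 (by positivity)]
      calc 1 * (4 * (C+1)) = 4 * (C+1) := by ring
        _ = (4 * (C+1) / ε) * ε := by field_simp
        _ ≤ T * ε := mul_le_mul_of_nonneg_right hTC hε.le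
        _ = ε * T := mul_comm _ _
    have e4 : (k:ℝ) * ((7/4) * C / T^2) = (7/4) * C * ((k:ℝ)/T) * (1/T) := by
      ring
    have h7 : (k:ℝ) * ((7/4) * C / T^2) ≤ (7/4) * C * (2 * L^γ / ε) * (ε / (4*(C+1))) := by
      rw [e4, e3]
      apply mul_le_mul_of_nonneg_left hinvT
      positivity
    have e5 : (7/4) * C * (2 * L^γ / ε) * (ε / (4*(C+1))) = 7 * C * L^γ / (8 * (C+1)) := by
      field_simp
      ring
    have h8 : 7 * C * L^γ / (8 * (C+1)) ≤ L ^ γ := by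
      rw [div_le_iff₀ (by positivity)]
      nlinarith [mul_nonneg hC0 hLγpos.le]
    have h9 : a * L ^ γ ≤ 1 * L ^ γ := mul_le_mul_of_nonneg_right ha1 hLγpos.le
    rw [e2]
    linarith
  calc (k:ℝ) * tb + Real.exp (-(ε * k / T) + k * ((7/4) * C / T^2))
      ≤ Real.exp (-a * L ^ γ) + Real.exp (-a * L ^ γ) := add_le_add htail_term hchern_term
    _ = 2 * Real.exp (-a * L ^ γ) := by ring

lemma twosided_main (X : ℕ → Ω → ℝ) (hmeas : ∀ i, Measurable (X i))
    (hindep : iIndepFun X P)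
    (hint : ∀ i, Integrable (X i) P) (hmean : ∀ i, ∫ ω, X i ω ∂P = 0)
    {K γ M C : ℝ} (hK : 0 < K) (hγ : 1 < γ) (hM1 : 1 ≤ M) (hC0 : 0 ≤ C)
    (htail : ∀ i, ∀ T : ℝ, 1 ≤ T →
      (P {ω | T < |X i ω|}).toReal ≤ M * Real.exp (-(K * Real.log T ^ γ)))
    (hsqint : ∀ i, Integrable (fun ω => (X i ω)^2) P)
    (hC : ∀ i, ∫ ω, (X i ω)^2 ∂P ≤ C)
    {a : ℝ} (ha0 : 0 < a) (ha1 : a ≤ 1) (haK : a ≤ K / (2 * (2:ℝ) ^ γ))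
    (ε : ℝ) (hε : 0 < ε) :
    ∀ᶠ k : ℕ in atTop, (P {ω | ε * k < |∑ i ∈ Finset.range k, X i ω|}).toReal ≤
      4 * Real.exp (-a * Real.log k ^ γ) := by
  have hpos := onesided_main X hmeas hindep hint hmean hK hγ hM1 hC0 htail hsqint hC
    ha0 ha1 haK ε hε
  -- negated variables
  set X' : ℕ → Ω → ℝ := fun i ω => -(X i ω) with hX'
  have hmeas' : ∀ i, Measurable (X' i) := fun i => (hmeas i).neg
  have hindep' : iIndepFun X' P :=
    hindep.comp (fun _ => fun x : ℝ => -x) (fun _ => measurable_neg)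
  have hint' : ∀ i, Integrable (X' i) P := fun i => (hint i).neg
  have hmean' : ∀ i, ∫ ω, X' i ω ∂P = 0 := by
    intro i
    simp only [hX']
    rw [integral_neg, hmean i, neg_zero]
  have htail' : ∀ i, ∀ T : ℝ, 1 ≤ T →
      (P {ω | T < |X' i ω|}).toReal ≤ M * Real.exp (-(K * Real.log T ^ γ)) := by
    intro i T hT
    have : {ω | T < |X' i ω|} = {ω | T < |X i ω|} := by
      ext ω; simp [hX', abs_neg]
    rw [this]; exact htail i T hT
  have hsqint' : ∀ i, Integrable (fun ω => (X' i ω)^2) P := by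
    intro i
    have : (fun ω => (X' i ω)^2) = fun ω => (X i ω)^2 := by
      funext ω; simp [hX']
    rw [this]; exact hsqint i
  have hC' : ∀ i, ∫ ω, (X' i ω)^2 ∂P ≤ C := by
    intro i
    have : (fun ω => (X' i ω)^2) = fun ω => (X i ω)^2 := by
      funext ω; simp [hX']
    rw [show (∫ ω, (X' i ω)^2 ∂P) = ∫ ω, (X i ω)^2 ∂P from by rw [this]]
    exact hC i
  have hneg := onesided_main X' hmeas' hindep' hint' hmean' hK hγ hM1 hC0 htail' hsqint' hC'
    ha0 ha1 haK ε hε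
  filter_upwards [hpos, hneg] with k hkp hkn
  have hsub : {ω | ε * k < |∑ i ∈ Finset.range k, X i ω|} ⊆
      {ω | ε * k ≤ ∑ i ∈ Finset.range k, X i ω} ∪
      {ω | ε * k ≤ ∑ i ∈ Finset.range k, X' i ω} := by
    intro ω hω
    simp only [Set.mem_setOf_eq] at hω
    rcases le_or_gt (ε * k) (∑ i ∈ Finset.range k, X i ω) with h | h
    · exact Or.inl h
    · right
      have habs : ε * k < -(∑ i ∈ Finset.range k, X i ω) := by
        rcases abs_cases (∑ i ∈ Finset.range k, X i ω) with ⟨he, _⟩ | ⟨he, _⟩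
        · rw [he] at hω; linarith
        · rw [he] at hω; linarith
      have : ∑ i ∈ Finset.range k, X' i ω = -(∑ i ∈ Finset.range k, X i ω) := by
        simp [hX']
      rw [Set.mem_setOf_eq, this]
      linarith
  have hm : (P {ω | ε * k < |∑ i ∈ Finset.range k, X i ω|}).toReal ≤
      (P {ω | ε * k ≤ ∑ i ∈ Finset.range k, X i ω}).toReal +
      (P {ω | ε * k ≤ ∑ i ∈ Finset.range k, X' i ω}).toReal := by
    refine le_trans (ENNReal.toReal_mono ?_ (le_trans (measure_mono hsub) (measure_union_le _ _)))
      ENNReal.toReal_add_le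
    exact ENNReal.add_ne_top.2 ⟨measure_ne_top _ _, measure_ne_top _ _⟩
  linarith [hm, hkp, hkn]

-- summability of the bound sequence
lemma summable_bound {a' γ : ℝ} (ha' : 0 < a') (hγ : 1 < γ) :
    Summable (fun k : ℕ => Real.exp (-a' * Real.log k ^ γ)) := by
  have hg : Summable (fun k : ℕ => 1 / (k:ℝ)^2) :=
    summable_one_div_nat_pow.2 one_lt_two
  apply summable_of_isBigO_nat hg
  apply Asymptotics.IsBigO.of_bound 1
  have hu : ∀ᶠ u : ℝ in atTop, 2 * u ≤ a' * u ^ γ := by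
    have h1 : ∀ᶠ u : ℝ in atTop, 2/a' ≤ u ^ (γ - 1) :=
      (tendsto_rpow_atTop (by linarith : (0:ℝ) < γ - 1)).eventually_ge_atTop _
    filter_upwards [h1, eventually_ge_atTop (1:ℝ)] with u hu1 hu3
    have hupos : (0:ℝ) < u := by linarith
    have hsplit : u ^ γ = u ^ (γ - 1) * u := by
      rw [← Real.rpow_add_one hupos.ne' (γ - 1)]; ring_nf
    have := mul_le_mul_of_nonneg_right hu1 hupos.le
    rw [hsplit]
    calc 2 * u = a' * (2/a' * u) := by field_simp
      _ ≤ a' * (u ^ (γ-1) * u) := by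
          exact mul_le_mul_of_nonneg_left this ha'.le
  have hev : ∀ᶠ k : ℕ in atTop,
      Real.exp (-a' * Real.log k ^ γ) ≤ 1 / (k:ℝ)^2 := by
    have hk1 := (tendsto_log_atTop.comp (tendsto_natCast_atTop_atTop (R := ℝ))).eventually hu
    filter_upwards [hk1, eventually_ge_atTop 1] with k hk hk1'
    have hk0 : (0:ℝ) < (k:ℝ) := by exact_mod_cast hk1'
    have hklog : 2 * Real.log k ≤ a' * Real.log k ^ γ := hk
    have hksq : ((k:ℝ))^2 = Real.exp (2 * Real.log k) := by
      rw [mul_comm, Real.exp_mul, Real.exp_log hk0]; norm_num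
    rw [le_div_iff₀ (by positivity), hksq, ← Real.exp_add]
    have : -a' * Real.log k ^ γ + 2 * Real.log k ≤ 0 := by linarith
    calc Real.exp (-a' * Real.log k ^ γ + 2 * Real.log k) ≤ Real.exp 0 :=
          Real.exp_le_exp.2 this
      _ = 1 := Real.exp_zero
  filter_upwards [hev] with k hk
  rw [Real.norm_eq_abs, Real.norm_eq_abs, abs_of_nonneg (Real.exp_pos _).le, one_mul]
  exact le_trans hk (le_abs_self _)

theorem final_assembly (X : ℕ → Ω → ℝ) (hmeas : ∀ i, Measurable (X i))
    (hindep : iIndepFun X P)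
    (hint : ∀ i, Integrable (X i) P) (hmean : ∀ i, ∫ ω, X i ω ∂P = 0)
    {K γ M C : ℝ} (hK : 0 < K) (hγ : 1 < γ) (hM1 : 1 ≤ M) (hC0 : 0 ≤ C)
    (htail : ∀ i, ∀ T : ℝ, 1 ≤ T →
      (P {ω | T < |X i ω|}).toReal ≤ M * Real.exp (-(K * Real.log T ^ γ)))
    (hsqint : ∀ i, Integrable (fun ω => (X i ω)^2) P)
    (hC : ∀ i, ∫ ω, (X i ω)^2 ∂P ≤ C)
    (ε : ℝ) (hε : 0 < ε) :
    ∃ c : ℝ, 0 < c ∧ ∀ n : ℕ, 1 ≤ n →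
      P {ω | ∃ k : ℕ, n ≤ k ∧ ε * k < |∑ i ∈ Finset.range k, X i ω|} ≤
        ENNReal.ofReal (c⁻¹ * Real.exp (-c * Real.log n ^ γ)) := by
  have hγ0 : (0:ℝ) ≤ γ := by linarith
  have h2γ : (0:ℝ) < (2:ℝ) ^ γ := Real.rpow_pos_of_pos two_pos γ
  set a : ℝ := min 1 (K / (2 * (2:ℝ) ^ γ)) with hadef
  have ha0 : 0 < a := lt_min one_pos (by positivity)
  have ha1 : a ≤ 1 := min_le_left _ _
  have haK : a ≤ K / (2 * (2:ℝ) ^ γ) := min_le_right _ _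
  have h2 := twosided_main X hmeas hindep hint hmean hK hγ hM1 hC0 htail hsqint hC
    ha0 ha1 haK ε hε
  obtain ⟨N, hN⟩ := eventually_atTop.mp h2
  set a' : ℝ := a / 2 with ha'def
  have ha'0 : 0 < a' := by positivity
  have hS : Summable (fun k : ℕ => Real.exp (-a' * Real.log k ^ γ)) := summable_bound ha'0 hγ
  set D : ℝ := ∑' k : ℕ, Real.exp (-a' * Real.log k ^ γ) with hDdef
  have hD0 : 0 ≤ D := tsum_nonneg fun k => (Real.exp_pos _).le
  set N' : ℕ := max N 1 with hN'def
  have hN'1 : 1 ≤ N' := le_max_right _ _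
  set c : ℝ := min (min a' (1/(4*D+1))) (Real.exp (-(Real.log N' ^ γ))) with hcdef
  have hc0 : 0 < c := lt_min (lt_min ha'0 (by positivity)) (Real.exp_pos _)
  have hca' : c ≤ a' := le_trans (min_le_left _ _) (min_le_left _ _)
  have hcD : c ≤ 1/(4*D+1) := le_trans (min_le_left _ _) (min_le_right _ _)
  have hcN' : c ≤ Real.exp (-(Real.log N' ^ γ)) := min_le_right _ _
  have hc1 : c ≤ 1 := le_trans hca' (by linarith [ha1, ha0])
  refine ⟨c, hc0, fun n hn => ?_⟩
  have hn0 : (0:ℝ) < (n:ℝ) := by exact_mod_cast hn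
  have hlogn0 : 0 ≤ Real.log n := Real.log_nonneg (by exact_mod_cast hn)
  have hun0 : 0 ≤ Real.log n ^ γ := Real.rpow_nonneg hlogn0 γ
  by_cases hnN : N' ≤ n
  · -- large n
    have hnN0 : N ≤ n := le_trans (le_max_left _ _) hnN
    set b : ℕ → ℝ := fun k => if n ≤ k then 4 * Real.exp (-a * Real.log k ^ γ) else 0 with hbdef
    have hb0 : ∀ k, 0 ≤ b k := by
      intro k; rw [hbdef]; dsimp only; split_ifs
      · positivity
      · exact le_refl 0
    have hbg : ∀ k, b k ≤ (4 * Real.exp (-a' * Real.log n ^ γ)) *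
        Real.exp (-a' * Real.log k ^ γ) := by
      intro k
      rw [hbdef]; dsimp only; split_ifs with hk
      · have hkn : (n:ℝ) ≤ (k:ℝ) := by exact_mod_cast hk
        have hulog : Real.log n ≤ Real.log k := Real.log_le_log hn0 hkn
        have hu : Real.log n ^ γ ≤ Real.log k ^ γ :=
          Real.rpow_le_rpow hlogn0 hulog hγ0
        have : -a * Real.log k ^ γ ≤ -a' * Real.log n ^ γ + -a' * Real.log k ^ γ := by
          have : a = a' + a' := by rw [ha'def]; ring
          nlinarith [hu, ha'0.le]
        calc 4 * Real.exp (-a * Real.log k ^ γ)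
            ≤ 4 * Real.exp (-a' * Real.log n ^ γ + -a' * Real.log k ^ γ) := by
              apply mul_le_mul_of_nonneg_left (Real.exp_le_exp.2 this) (by norm_num)
          _ = (4 * Real.exp (-a' * Real.log n ^ γ)) * Real.exp (-a' * Real.log k ^ γ) := by
              rw [Real.exp_add]; ring
      · positivity
    have hg_sum : Summable (fun k : ℕ => (4 * Real.exp (-a' * Real.log n ^ γ)) *
        Real.exp (-a' * Real.log k ^ γ)) := hS.mul_left _
    have hbsum : Summable b := Summable.of_nonneg_of_le hb0 hbg hg_sum
    have htsum : ∑' k, b k ≤ 4 * Real.exp (-a' * Real.log n ^ γ) * D := by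
      calc ∑' k, b k ≤ ∑' k : ℕ, (4 * Real.exp (-a' * Real.log n ^ γ)) *
            Real.exp (-a' * Real.log k ^ γ) := Summable.tsum_le_tsum hbg hbsum hg_sum
        _ = 4 * Real.exp (-a' * Real.log n ^ γ) * D := by
            rw [tsum_mul_left]
    have hev : {ω | ∃ k : ℕ, n ≤ k ∧ ε * k < |∑ i ∈ Finset.range k, X i ω|} =
        ⋃ k : ℕ, {ω | n ≤ k ∧ ε * k < |∑ i ∈ Finset.range k, X i ω|} := by
      ext ω; simp [Set.mem_iUnion]
    have hles : ∀ k : ℕ, P {ω | n ≤ k ∧ ε * k < |∑ i ∈ Finset.range k, X i ω|} ≤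
        ENNReal.ofReal (b k) := by
      intro k
      by_cases hk : n ≤ k
      · have hset : {ω | n ≤ k ∧ ε * k < |∑ i ∈ Finset.range k, X i ω|} =
            {ω | ε * k < |∑ i ∈ Finset.range k, X i ω|} := by
          ext ω; simp [hk]
        rw [hset]
        have hbk : b k = 4 * Real.exp (-a * Real.log k ^ γ) := by
          rw [hbdef]; dsimp only; rw [if_pos hk]
        rw [hbk]
        rw [ENNReal.le_ofReal_iff_toReal_le (measure_ne_top _ _) (by positivity)]
        exact hN k (le_trans hnN0 hk)
      · have hset : {ω | n ≤ k ∧ ε * k < |∑ i ∈ Finset.range k, X i ω|} = ∅ := by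
          ext ω; simp [hk]
        rw [hset]
        simp
    calc P {ω | ∃ k : ℕ, n ≤ k ∧ ε * k < |∑ i ∈ Finset.range k, X i ω|}
        ≤ ∑' k : ℕ, P {ω | n ≤ k ∧ ε * k < |∑ i ∈ Finset.range k, X i ω|} := by
          rw [hev]; exact measure_iUnion_le _
      _ ≤ ∑' k : ℕ, ENNReal.ofReal (b k) := ENNReal.tsum_le_tsum hles
      _ = ENNReal.ofReal (∑' k, b k) := (ENNReal.ofReal_tsum_of_nonneg hb0 hbsum).symm
      _ ≤ ENNReal.ofReal (c⁻¹ * Real.exp (-c * Real.log n ^ γ)) := by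
          apply ENNReal.ofReal_le_ofReal
          refine le_trans htsum ?_
          have h4D : 4 * D ≤ c⁻¹ := by
            have hQ : (0:ℝ) < 4*D+1 := by linarith
            have := one_div_le_one_div_of_le hc0 hcD
            rw [one_div_one_div] at this
            calc 4 * D ≤ 4*D+1 := by linarith
              _ ≤ 1/c := this
              _ = c⁻¹ := one_div c
          have hexp : Real.exp (-a' * Real.log n ^ γ) ≤ Real.exp (-c * Real.log n ^ γ) := by
            apply Real.exp_le_exp.2
            nlinarith [hca', hun0]
          calc 4 * Real.exp (-a' * Real.log n ^ γ) * D
              = (4 * D) * Real.exp (-a' * Real.log n ^ γ) := by ring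
            _ ≤ c⁻¹ * Real.exp (-c * Real.log n ^ γ) :=
                mul_le_mul h4D hexp (Real.exp_pos _).le (by positivity)
  · -- small n
    push_neg at hnN
    have hnle : (n:ℝ) ≤ (N':ℝ) := by exact_mod_cast hnN.le
    have hlogle : Real.log n ≤ Real.log N' := Real.log_le_log hn0 hnle
    have huNle : Real.log n ^ γ ≤ Real.log N' ^ γ :=
      Real.rpow_le_rpow hlogn0 hlogle hγ0
    have hkey : c ≤ Real.exp (-c * Real.log n ^ γ) := by
      refine le_trans hcN' (Real.exp_le_exp.2 ?_)
      nlinarith [hc1, hun0, huNle, hc0.le]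
    have hone : (1:ℝ) ≤ c⁻¹ * Real.exp (-c * Real.log n ^ γ) := by
      have := mul_le_mul_of_nonneg_left hkey (inv_nonneg.2 hc0.le)
      rwa [inv_mul_cancel₀ hc0.ne'] at this
    calc P {ω | ∃ k : ℕ, n ≤ k ∧ ε * k < |∑ i ∈ Finset.range k, X i ω|} ≤ 1 :=
          prob_le_one
      _ = ENNReal.ofReal 1 := ENNReal.ofReal_one.symm
      _ ≤ ENNReal.ofReal (c⁻¹ * Real.exp (-c * Real.log n ^ γ)) :=
          ENNReal.ofReal_le_ofReal hone

end Aux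


theorem stmt9 {Ω : Type*} [MeasurableSpace Ω] (P : Measure Ω) [IsProbabilityMeasure P]
    (X : ℕ → Ω → ℝ) (hmeas : ∀ i, Measurable (X i))
    (hindep : iIndepFun X P)
    (hint : ∀ i, Integrable (X i) P)
    (hmean : ∀ i, ∫ ω, X i ω ∂P = 0)
    (K γ : ℝ) (hK : 0 < K) (hγ : 1 < γ)
    (hexpint : ∀ i, Integrable (fun ω => Real.exp (K * Real.log (max |X i ω| 1) ^ γ)) P)
    (M : ℝ) (hM : ∀ i, ∫ ω, Real.exp (K * Real.log (max |X i ω| 1) ^ γ) ∂P ≤ M) :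
    ∀ ε : ℝ, 0 < ε → ∃ c : ℝ, 0 < c ∧ ∀ n : ℕ, 1 ≤ n →
      P {ω | ∃ k : ℕ, n ≤ k ∧ ε * k < |∑ i ∈ Finset.range k, X i ω|} ≤
        ENNReal.ofReal (c⁻¹ * Real.exp (-c * Real.log n ^ γ)) := by
  intro ε hε
  have hγ0 : (0:ℝ) ≤ γ := by linarith
  obtain ⟨B, hB0, hB⟩ := lin_le_rpow hK hγ 2 two_pos
  have hsq : ∀ x : ℝ, x ^ 2 ≤ Real.exp B * Real.exp (K * Real.log (max |x| 1) ^ γ) :=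
    sq_le_expmom hB
  have hM1 : 1 ≤ M := M_ge_one hK.le (hexpint 0) (hM 0)
  have hsqint : ∀ i, Integrable (fun ω => (X i ω)^2) P :=
    fun i => (sq_integrable (hmeas i) hB hsq (hexpint i) (hM i)).1
  have hC : ∀ i, ∫ ω, (X i ω)^2 ∂P ≤ Real.exp B * M :=
    fun i => (sq_integrable (hmeas i) hB hsq (hexpint i) (hM i)).2
  have hC0 : (0:ℝ) ≤ Real.exp B * M := by positivity
  have htail : ∀ i, ∀ T : ℝ, 1 ≤ T →
      (P {ω | T < |X i ω|}).toReal ≤ M * Real.exp (-(K * Real.log T ^ γ)) :=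
    fun i T hT => tail_bound hK hγ0 (hexpint i) (hM i) hT
  exact final_assembly X hmeas hindep hint hmean hK hγ hM1 hC0 htail hsqint hC ε hε
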